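/- Let f ∈ S⁰_{m,L}, ρ ∈ (0,1], ν ∈ ℕ with ν ≥ 1, and define F̄_m(t,z) := ρ^{-t}·∇f_m(ρᵗ·z) and F̄^L(t,z) := ρ^{-t}·∇f^L(ρᵗ·z) for t ∈ ℕ and z ∈ ℝᵈ (with F̄^L(t,z) := 0 for t < 0). Then for every sequence z̄ : ℕ → ℝᵈ and every T ≥ 1, the sum ∑_{t=0}^{T-1} ⟨F̄_m(t, z̄_t), F̄^L(t, z̄_t) - ρ^ν · F̄^L(t-ν, z̄_{t-ν})⟩ is nonnegative (where terms with t - ν < 0 have F̄^L(t-ν, z̄_{t-ν}) = 0). -/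

import Mathlib

open scoped RealInnerProductSpace
variable {E : Type*} [NormedAddCommGroup E] [InnerProductSpace ℝ E] [CompleteSpace E]

lemma hasGradientAt_q (c : ℝ) (x : E) :
    HasGradientAt (fun y => c * (‖y‖ ^ 2 / 2)) (c • x) x := by
  rw [hasGradientAt_iff_hasFDerivAt]
  have h := ((hasStrictFDerivAt_norm_sq x).hasFDerivAt).const_mul (c/2)
  have heq : (fun y : E => c / 2 * ‖y‖ ^ 2) = fun y => c * (‖y‖^2/2) := by
    funext y; ring
  rw [heq] at h
  convert h using 1
  · rfl
  ext y
  simp [InnerProductSpace.toDual_apply_apply, inner_smul_left, real_inner_smul_left, two_smul]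
  ring

lemma grad_sub_q (f : E → ℝ) (hf : Differentiable ℝ f) (c : ℝ) (x : E) :
    HasGradientAt (fun y => f y - c * (‖y‖ ^ 2 / 2)) (gradient f x - c • x) x := by
  have h1 := (hf x).hasGradientAt
  have h2 := hasGradientAt_q c x
  rw [hasGradientAt_iff_hasFDerivAt] at h1 h2 ⊢
  rw [map_sub]
  exact h1.sub h2

lemma grad_q_sub (f : E → ℝ) (hf : Differentiable ℝ f) (c : ℝ) (x : E) :
    HasGradientAt (fun y => c * (‖y‖ ^ 2 / 2) - f y) (c • x - gradient f x) x := by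
  have h1 := (hf x).hasGradientAt
  have h2 := hasGradientAt_q c x
  rw [hasGradientAt_iff_hasFDerivAt] at h1 h2 ⊢
  rw [map_sub]
  exact h2.sub h1

lemma convex_first_order (φ : E → ℝ) (hφ : ConvexOn ℝ Set.univ φ)
    (hd : Differentiable ℝ φ) (x y : E) :
    φ x + ⟪gradient φ x, y - x⟫ ≤ φ y := by
  have hg : HasDerivAt (fun t : ℝ => φ (x + t • (y - x))) ⟪gradient φ x, y - x⟫ 0 := by
    have hline : HasDerivAt (fun t : ℝ => x + t • (y - x)) (y - x) 0 := by
      simpa using ((hasDerivAt_id (0:ℝ)).smul_const (y - x)).const_add x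
    have := (hd (x + (0:ℝ) • (y - x))).hasFDerivAt.comp_hasDerivAt 0 hline
    simp only [zero_smul, add_zero] at this
    have hfd : fderiv ℝ φ x (y - x) = ⟪gradient φ x, y - x⟫ := by
      rw [gradient, ← InnerProductSpace.toDual_apply_apply]; simp
    rwa [hfd] at this
  have hconv : ConvexOn ℝ Set.univ (fun t : ℝ => φ (x + t • (y - x))) := by
    have h := hφ.comp_affineMap (AffineMap.lineMap x y)
    simp only [AffineMap.comp, Set.preimage_univ] at h
    have e : (fun t : ℝ => φ (x + t • (y - x))) = φ ∘ AffineMap.lineMap x y := by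
      funext t
      simp [Function.comp, AffineMap.lineMap_apply, add_comm]
    rw [e]; exact h
  have := hconv.le_slope_of_hasDerivAt (Set.mem_univ (0:ℝ)) (Set.mem_univ (1:ℝ))
    one_pos hg
  simp [slope_def_field] at this
  have hfd2 : ⟪gradient φ x, y - x⟫ = fderiv ℝ φ x y - fderiv ℝ φ x x := by
    rw [gradient, InnerProductSpace.toDual_symm_apply, map_sub]
  linarith [this]

lemma descent_lemma (g : E → ℝ) (hg : Differentiable ℝ g) (κ : ℝ)
    (hκ : ConvexOn ℝ Set.univ (fun y => κ * (‖y‖ ^ 2 / 2) - g y)) (x1 x2 : E) :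
    g x2 ≤ g x1 + ⟪gradient g x1, x2 - x1⟫ + κ / 2 * ‖x2 - x1‖ ^ 2 := by
  set φ : E → ℝ := fun y => κ * (‖y‖ ^ 2 / 2) - g y with hφdef
  have hφd : Differentiable ℝ φ := fun x => ((grad_q_sub g hg κ x).differentiableAt)
  have hgrad : gradient φ x1 = κ • x1 - gradient g x1 := (grad_q_sub g hg κ x1).gradient
  have h := convex_first_order φ hκ hφd x1 x2
  rw [hgrad] at h
  simp only [hφdef] at h
  rw [inner_sub_left, real_inner_smul_left] at h
  have e1 : ‖x2 - x1‖ ^ 2 = ‖x2‖ ^ 2 - 2 * ⟪x1, x2⟫ + ‖x1‖ ^ 2 := by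
    rw [norm_sub_sq_real, real_inner_comm]
  have e2 : ⟪x1, x2 - x1⟫ = ⟪x1, x2⟫ - ‖x1‖ ^ 2 := by
    rw [inner_sub_right, real_inner_self_eq_norm_sq]
  rw [e2] at h
  rw [e1]
  linarith

lemma master_ineq (g : E → ℝ) (hg : Differentiable ℝ g) (κ : ℝ) (hκ0 : 0 < κ)
    (hgc : ConvexOn ℝ Set.univ g)
    (hκ : ConvexOn ℝ Set.univ (fun y => κ * (‖y‖ ^ 2 / 2) - g y)) (u y : E) :
    g u - g y ≤ ⟪gradient g u, u - y⟫ - ‖gradient g u - gradient g y‖ ^ 2 / (2 * κ) := by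
  set p := gradient g u with hp
  set q := gradient g y with hq
  set x : E := y - κ⁻¹ • (q - p) with hx
  have h1 := convex_first_order g hgc hg u x
  have h2 := descent_lemma g hg κ hκ y x
  have hκinv : κ * κ⁻¹ = 1 := mul_inv_cancel₀ (ne_of_gt hκ0)
  have E1 : ⟪p, x - u⟫ = ⟪p, y - u⟫ - κ⁻¹ * (⟪p, q⟫ - ⟪p, p⟫) := by
    simp [hx, inner_sub_right, real_inner_smul_right]
    ring
  have E2 : ⟪q, x - y⟫ = -(κ⁻¹ * (⟪q, q⟫ - ⟪q, p⟫)) := by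
    simp [hx, inner_sub_right, real_inner_smul_right]
  have E3 : ‖x - y‖ ^ 2 = κ⁻¹ ^ 2 * ‖q - p‖ ^ 2 := by
    have : x - y = -(κ⁻¹ • (q - p)) := by rw [hx]; abel
    rw [this, norm_neg, norm_smul, Real.norm_eq_abs, mul_pow, sq_abs]
  have E4 : ‖q - p‖ ^ 2 = ⟪q, q⟫ - 2 * ⟪p, q⟫ + ⟪p, p⟫ := by
    rw [norm_sub_sq_real, real_inner_self_eq_norm_sq, real_inner_self_eq_norm_sq,
      real_inner_comm]
  have E5 : ⟪p, u - y⟫ = -⟪p, y - u⟫ := by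
    rw [← inner_neg_right, neg_sub]
  have E6 : ‖p - q‖ ^ 2 = ‖q - p‖ ^ 2 := by rw [norm_sub_rev]
  have E7 : ⟪q, p⟫ = ⟪p, q⟫ := real_inner_comm p q
  rw [E1] at h1
  rw [E2, E3] at h2
  rw [E5, E6, E4]
  have hk2 : κ / 2 * (κ⁻¹ ^ 2 * ‖q - p‖ ^ 2) = κ⁻¹ / 2 * ‖q - p‖ ^ 2 := by
    rw [show κ / 2 * (κ⁻¹ ^ 2 * ‖q - p‖ ^ 2) = (κ * κ⁻¹) * (κ⁻¹ / 2 * ‖q - p‖ ^ 2) by ring,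
      hκinv, one_mul]
  rw [hk2, E4] at h2
  have hdiv : (⟪q, q⟫ - 2 * ⟪p, q⟫ + ⟪p, p⟫) / (2 * κ) =
      κ⁻¹ / 2 * (⟪q, q⟫ - 2 * ⟪p, q⟫ + ⟪p, p⟫) := by
    rw [div_eq_mul_inv, mul_inv]; ring
  rw [hdiv]
  rw [E7] at h2
  linarith

section Main
variable {E : Type*} [NormedAddCommGroup E] [InnerProductSpace ℝ E] [CompleteSpace E]

/-- The Lyapunov-type inequalities. -/
lemma V_lemmas (f : E → ℝ) (hf : Differentiable ℝ f) (m L : ℝ) (hmL : m < L)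
    (hfm : ConvexOn ℝ Set.univ (fun x => f x - m * (‖x‖ ^ 2 / 2)))
    (hfL : ConvexOn ℝ Set.univ (fun x => L * (‖x‖ ^ 2 / 2) - f x))
    (hf0 : f 0 = 0) (hgrad0 : gradient f 0 = 0) :
    ∀ u y : E,
      0 ≤ (L - m) * (f u - m * (‖u‖ ^ 2 / 2))
            - ‖gradient (fun x => f x - m * (‖x‖ ^ 2 / 2)) u‖ ^ 2 / 2 ∧
      ((L - m) * (f u - m * (‖u‖ ^ 2 / 2))
            - ‖gradient (fun x => f x - m * (‖x‖ ^ 2 / 2)) u‖ ^ 2 / 2)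
        - ((L - m) * (f y - m * (‖y‖ ^ 2 / 2))
            - ‖gradient (fun x => f x - m * (‖x‖ ^ 2 / 2)) y‖ ^ 2 / 2)
        ≤ ⟪gradient (fun x => f x - m * (‖x‖ ^ 2 / 2)) u,
            gradient (fun x => L * (‖x‖ ^ 2 / 2) - f x) u
              - gradient (fun x => L * (‖x‖ ^ 2 / 2) - f x) y⟫ := by
  intro u y
  set κ := L - m with hκdef
  have hκ0 : 0 < κ := by rw [hκdef]; linarith
  set g : E → ℝ := fun x => f x - m * (‖x‖ ^ 2 / 2) with hgdef
  have hgd : Differentiable ℝ g := fun x => (grad_sub_q f hf m x).differentiableAt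
  have hfuneq : (fun x : E => κ * (‖x‖ ^ 2 / 2) - g x) = fun x => L * (‖x‖ ^ 2 / 2) - f x := by
    funext x; rw [hgdef, hκdef]; ring
  have hκconv : ConvexOn ℝ Set.univ (fun x : E => κ * (‖x‖ ^ 2 / 2) - g x) := by
    rw [hfuneq]; exact hfL
  have hGL : ∀ x : E, gradient (fun x => L * (‖x‖ ^ 2 / 2) - f x) x
      = κ • x - gradient g x := by
    intro x
    rw [(grad_q_sub f hf L x).gradient, hgdef, (grad_sub_q f hf m x).gradient, hκdef,
      sub_smul]
    abel
  have hmaster := master_ineq g hgd κ hκ0 hfm hκconv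
  have hg0 : g 0 = 0 := by rw [hgdef]; simp [hf0]
  have hG0 : gradient g 0 = 0 := by
    rw [hgdef, (grad_sub_q f hf m 0).gradient, hgrad0]; simp
  have hκinv : κ * κ⁻¹ = 1 := mul_inv_cancel₀ (ne_of_gt hκ0)
  have hVpos : ∀ x : E, ‖gradient g x‖ ^ 2 / (2 * κ) ≤ g x := by
    intro x
    have h := hmaster 0 x
    rw [hg0, hG0] at h
    simp only [inner_zero_left, zero_sub, norm_neg] at h
    linarith
  have hV0 : ∀ x : E, 0 ≤ κ * g x - ‖gradient g x‖ ^ 2 / 2 := by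
    intro x
    have h := hVpos x
    have h2 : κ * (‖gradient g x‖ ^ 2 / (2 * κ)) = ‖gradient g x‖ ^ 2 / 2 := by
      rw [div_eq_mul_inv, mul_inv, show κ * (‖gradient g x‖ ^ 2 * (2⁻¹ * κ⁻¹)) =
        (κ * κ⁻¹) * (‖gradient g x‖ ^ 2 * 2⁻¹) by ring, hκinv, one_mul, div_eq_mul_inv]
    nlinarith [mul_le_mul_of_nonneg_left h (le_of_lt hκ0)]
  constructor
  · exact hV0 u
  · show κ * g u - ‖gradient g u‖ ^ 2 / 2 - (κ * g y - ‖gradient g y‖ ^ 2 / 2)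
      ≤ ⟪gradient g u, gradient (fun x => L * (‖x‖ ^ 2 / 2) - f x) u
          - gradient (fun x => L * (‖x‖ ^ 2 / 2) - f x) y⟫
    rw [hGL u, hGL y]
    have hm' := hmaster u y
    have Ei : ⟪gradient g u, (κ • u - gradient g u) - (κ • y - gradient g y)⟫
        = κ * ⟪gradient g u, u - y⟫ - ⟪gradient g u, gradient g u⟫
          + ⟪gradient g u, gradient g y⟫ := by
      rw [show (κ • u - gradient g u) - (κ • y - gradient g y)
          = κ • (u - y) - (gradient g u - gradient g y) by rw [smul_sub]; abel]
      rw [inner_sub_right, inner_sub_right, real_inner_smul_right]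
      ring
    have En : ‖gradient g u - gradient g y‖ ^ 2
        = ⟪gradient g u, gradient g u⟫ - 2 * ⟪gradient g u, gradient g y⟫
          + ⟪gradient g y, gradient g y⟫ := by
      rw [norm_sub_sq_real, real_inner_self_eq_norm_sq, real_inner_self_eq_norm_sq]
    have Eu : ⟪gradient g u, gradient g u⟫ = ‖gradient g u‖ ^ 2 :=
      real_inner_self_eq_norm_sq _
    have Ey : ⟪gradient g y, gradient g y⟫ = ‖gradient g y‖ ^ 2 :=
      real_inner_self_eq_norm_sq _
    have hB : κ * (‖gradient g u - gradient g y‖ ^ 2 / (2 * κ))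
        = ‖gradient g u - gradient g y‖ ^ 2 / 2 := by
      rw [div_eq_mul_inv, mul_inv, show κ * (‖gradient g u - gradient g y‖ ^ 2 * (2⁻¹ * κ⁻¹)) =
        (κ * κ⁻¹) * (‖gradient g u - gradient g y‖ ^ 2 * 2⁻¹) by ring, hκinv, one_mul,
        div_eq_mul_inv]
    have hmk2 : κ * g u - κ * g y ≤ κ * ⟪gradient g u, u - y⟫
        - ‖gradient g u - gradient g y‖ ^ 2 / 2 := by
      have h3 := mul_le_mul_of_nonneg_left hm' (le_of_lt hκ0)
      have e1 : κ * (g u - g y) = κ * g u - κ * g y := mul_sub κ (g u) (g y)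
      have e2 : κ * (⟪gradient g u, u - y⟫ - ‖gradient g u - gradient g y‖ ^ 2 / (2 * κ))
          = κ * ⟪gradient g u, u - y⟫
            - κ * (‖gradient g u - gradient g y‖ ^ 2 / (2 * κ)) := mul_sub _ _ _
      linarith [h3, e1, e2, hB]
    rw [Ei]
    linarith [hmk2, En, Eu, Ey]

end Main

set_option maxHeartbeats 2000000 in
theorem delayed_dynamic_iqc
    (d : ℕ) (m L ρ : ℝ) (hm : 0 ≤ m) (hmL : m < L) (hρ0 : 0 < ρ) (hρ1 : ρ ≤ 1)
    (ν : ℕ) (hν : 1 ≤ ν)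
    (f : EuclideanSpace ℝ (Fin d) → ℝ) (hf : Differentiable ℝ f)
    (hfm : ConvexOn ℝ Set.univ (fun x => f x - m * (‖x‖ ^ 2 / 2)))
    (hfL : ConvexOn ℝ Set.univ (fun x => L * (‖x‖ ^ 2 / 2) - f x))
    (hf0 : f 0 = 0) (hgrad0 : gradient f 0 = 0)
    (Fm FL : ℕ → EuclideanSpace ℝ (Fin d) → EuclideanSpace ℝ (Fin d))
    (hFm : ∀ t z, Fm t z =
      (ρ ^ t)⁻¹ • gradient (fun x => f x - m * (‖x‖ ^ 2 / 2)) (ρ ^ t • z))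
    (hFL : ∀ t z, FL t z =
      (ρ ^ t)⁻¹ • gradient (fun x => L * (‖x‖ ^ 2 / 2) - f x) (ρ ^ t • z)) :
    ∀ (zb : ℕ → EuclideanSpace ℝ (Fin d)) (T : ℕ), 1 ≤ T →
      0 ≤ ∑ t ∈ Finset.range T,
        ⟪Fm t (zb t), FL t (zb t) -
          ρ ^ ν • (if ν ≤ t then FL (t - ν) (zb (t - ν)) else 0)⟫ := by
  intro zb T hT
  set G : EuclideanSpace ℝ (Fin d) → EuclideanSpace ℝ (Fin d) := fun x => gradient (fun x => f x - m * (‖x‖ ^ 2 / 2)) x with hGdef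
  set H : EuclideanSpace ℝ (Fin d) → EuclideanSpace ℝ (Fin d) := fun x => gradient (fun x => L * (‖x‖ ^ 2 / 2) - f x) x with hHdef
  set V : EuclideanSpace ℝ (Fin d) → ℝ := fun x => (L - m) * (f x - m * (‖x‖ ^ 2 / 2)) - ‖G x‖ ^ 2 / 2 with hVdef
  have hV := V_lemmas f hf m L hmL hfm hfL hf0 hgrad0
  have hVpos : ∀ x : EuclideanSpace ℝ (Fin d), 0 ≤ V x := fun x => (hV x x).1
  have hKey : ∀ u y : EuclideanSpace ℝ (Fin d), V u - V y ≤ ⟪G u, H u - H y⟫ := fun u y => (hV u y).2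
  have hH0 : H (0 : EuclideanSpace ℝ (Fin d)) = 0 := by
    rw [hHdef]
    show gradient (fun x : EuclideanSpace ℝ (Fin d) => L * (‖x‖ ^ 2 / 2) - f x) 0 = 0
    rw [(grad_q_sub f hf L 0).gradient, hgrad0]; simp
  have hV0 : V (0 : EuclideanSpace ℝ (Fin d)) = 0 := by
    rw [hVdef]
    show (L - m) * (f 0 - m * (‖(0:EuclideanSpace ℝ (Fin d))‖ ^ 2 / 2)) - ‖G 0‖ ^ 2 / 2 = 0
    have hG0 : G (0 : EuclideanSpace ℝ (Fin d)) = 0 := by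
      rw [hGdef]
      show gradient (fun x : EuclideanSpace ℝ (Fin d) => f x - m * (‖x‖ ^ 2 / 2)) 0 = 0
      rw [(grad_sub_q f hf m 0).gradient, hgrad0]; simp
    rw [hG0, hf0]; simp
  have hSingle : ∀ u : EuclideanSpace ℝ (Fin d), V u ≤ ⟪G u, H u⟫ := by
    intro u
    have := hKey u 0
    rw [hH0, hV0, sub_zero, sub_zero] at this
    exact this
  set u : ℕ → EuclideanSpace ℝ (Fin d) := fun t => ρ ^ t • zb t with hudef
  set W : ℕ → ℝ := fun t => ((ρ ^ t)⁻¹) ^ 2 * V (u t) with hWdef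
  have hWpos : ∀ t, 0 ≤ W t := fun t => mul_nonneg (sq_nonneg _) (hVpos _)
  have hterm : ∀ t, W t - (if ν ≤ t then W (t - ν) else 0) ≤
      ⟪Fm t (zb t), FL t (zb t) -
        ρ ^ ν • (if ν ≤ t then FL (t - ν) (zb (t - ν)) else 0)⟫ := by
    intro t
    by_cases h : ν ≤ t
    · simp only [h, if_true]
      rw [hFm, hFL, hFL]
      have hb : (ρ ^ (t - ν))⁻¹ = ρ ^ ν * (ρ ^ t)⁻¹ := by
        have : ρ ^ (t - ν) * ρ ^ ν = ρ ^ t := by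
          rw [← pow_add, Nat.sub_add_cancel h]
        field_simp
        rw [← this, mul_comm]
      rw [hb]
      set a := (ρ ^ t)⁻¹ with hadef
      have ha0 : 0 ≤ a := by positivity
      set s := ρ ^ ν * ρ ^ ν with hsdef
      have hs0 : 0 ≤ s := by positivity
      have hs1 : s ≤ 1 := by
        rw [hsdef]
        have := pow_le_one₀ (le_of_lt hρ0) hρ1 (n := ν)
        have h0 := pow_nonneg (le_of_lt hρ0) ν
        nlinarith
      have hsmul : ρ ^ ν • ((ρ ^ ν * a) • H (u (t - ν))) = (s * a) • H (u (t - ν)) := by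
        rw [smul_smul, hsdef]; ring_nf
      rw [hsmul]
      have hinner : ⟪a • G (u t), a • H (u t) - (s * a) • H (u (t - ν))⟫
          = a ^ 2 * (⟪G (u t), H (u t)⟫ - s * ⟪G (u t), H (u (t - ν))⟫) := by
        rw [inner_sub_right, real_inner_smul_left, real_inner_smul_left,
          real_inner_smul_right, real_inner_smul_right]
        ring
      rw [hinner]
      have hcomb : V (u t) - s * V (u (t - ν))
          ≤ ⟪G (u t), H (u t)⟫ - s * ⟪G (u t), H (u (t - ν))⟫ := by
        have h1 := hSingle (u t)
        have h2 := hKey (u t) (u (t - ν))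
        rw [inner_sub_right] at h2
        nlinarith [h1, h2, hs0, hs1]
      have hW2 : W (t - ν) = s * a ^ 2 * V (u (t - ν)) := by
        rw [hWdef]
        show ((ρ ^ (t - ν))⁻¹) ^ 2 * V (u (t - ν)) = s * a ^ 2 * V (u (t - ν))
        rw [hb, hsdef]; ring
      rw [hW2, hWdef]
      show a ^ 2 * V (u t) - s * a ^ 2 * V (u (t - ν)) ≤ _
      nlinarith [mul_le_mul_of_nonneg_left hcomb (sq_nonneg a)]
    · simp only [h, if_false, smul_zero, sub_zero]
      rw [hFm, hFL]
      have hinner : ⟪(ρ ^ t)⁻¹ • G (u t), (ρ ^ t)⁻¹ • H (u t)⟫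
          = ((ρ ^ t)⁻¹) ^ 2 * ⟪G (u t), H (u t)⟫ := by
        rw [real_inner_smul_left, real_inner_smul_right]; ring
      rw [hinner]
      exact mul_le_mul_of_nonneg_left (hSingle (u t)) (sq_nonneg _)
  have hsum := Finset.sum_le_sum (fun t (_ : t ∈ Finset.range T) => hterm t)
  rw [Finset.sum_sub_distrib] at hsum
  have hle : ∑ t ∈ Finset.range T, (if ν ≤ t then W (t - ν) else 0)
      ≤ ∑ t ∈ Finset.range T, W t := by
    rw [Finset.sum_ite, Finset.sum_const_zero, add_zero]
    have hinj : ∀ a ∈ (Finset.range T).filter (fun x => ν ≤ x),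
        ∀ b ∈ (Finset.range T).filter (fun x => ν ≤ x), a - ν = b - ν → a = b := by
      intro a ha b hb hab
      simp only [Finset.mem_filter, Finset.mem_range] at ha hb
      omega
    have himg :
        ∑ x ∈ ((Finset.range T).filter (fun x => ν ≤ x)).image (fun t => t - ν), W x
          = ∑ x ∈ (Finset.range T).filter (fun x => ν ≤ x), W (x - ν) :=
      Finset.sum_image hinj
    rw [← himg]
    apply Finset.sum_le_sum_of_subset_of_nonneg
    · intro x hx
      simp only [Finset.mem_image, Finset.mem_filter, Finset.mem_range] at hx ⊢
      obtain ⟨t, ⟨ht, _⟩, rfl⟩ := hx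
      omega
    · intro i _ _
      exact hWpos i
  linarith [hsum, hle]
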